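/- Let v_max, a_max > 0, let (x₀, y₀), (x₁, y₁) ∈ ℝ² and (v₀ˣ, v₀ʸ) ∈ ℝ². Define Feas_x as the set of times T > 0 for which there exists a twice-differentiable p : ℝ → ℝ with p(0) = x₀, p'(0) = v₀ˣ, p(T) = x₁, p'(T) = 0, and |p'(t)| ≤ v_max, |p''(t)| ≤ a_max for all t ∈ [0,T]; define Feas_y analogously for the y data. Define Feas₂ as the set of times T > 0 for which a trajectory P : ℝ → ℝ² with twice-differentiable components exists with P(0) = (x₀, y₀), P'(0) = (v₀ˣ, v₀ʸ), P(T) = (x₁, y₁), P'(T) = (0,0), and ‖P'(t)‖_∞ ≤ v_max, ‖P''(t)‖_∞ ≤ a_max on [0,T]. If Feas_x and Feas_y are both nonempty, then Feas₂ is nonempty and sInf Feas₂ = max(sInf Feas_x, sInf Feas_y). -/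

import Mathlib

open Set

/-- Feasible travel times for a one-dimensional double integrator moving from
position `x₀` with initial velocity `v₀` to position `x₁` with zero terminal
velocity, under velocity bound `vmax` and acceleration bound `amax`. -/
def Feas1 (vmax amax x₀ v₀ x₁ : ℝ) : Set ℝ :=
  {T : ℝ | 0 < T ∧ ∃ p v a : ℝ → ℝ,
    (∀ t, HasDerivAt p (v t) t) ∧ (∀ t, HasDerivAt v (a t) t) ∧
    p 0 = x₀ ∧ v 0 = v₀ ∧ p T = x₁ ∧ v T = 0 ∧
    ∀ t ∈ Set.Icc 0 T, |v t| ≤ vmax ∧ |a t| ≤ amax}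

/-- Feasible travel times for the two-dimensional double integrator under
infinity-norm velocity and acceleration bounds, with zero terminal velocity. -/
def Feas2 (vmax amax x₀ y₀ v₀x v₀y x₁ y₁ : ℝ) : Set ℝ :=
  {T : ℝ | 0 < T ∧ ∃ P V A : ℝ → ℝ × ℝ,
    (∀ t, HasDerivAt P (V t) t) ∧ (∀ t, HasDerivAt V (A t) t) ∧
    P 0 = (x₀, y₀) ∧ V 0 = (v₀x, v₀y) ∧ P T = (x₁, y₁) ∧ V T = (0, 0) ∧
    ∀ t ∈ Set.Icc 0 T,
      (|(V t).1| ≤ vmax ∧ |(V t).2| ≤ vmax) ∧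
      (|(A t).1| ≤ amax ∧ |(A t).2| ≤ amax)}

open Real Filter Set in
lemma glue_deriv {f g f' g' : ℝ → ℝ} {T : ℝ}
    (hf : ∀ t, HasDerivAt f (f' t) t) (hg : ∀ t, HasDerivAt g (g' t) t)
    (hval : f T = g T) (hder : f' T = g' T) (t : ℝ) :
    HasDerivAt (fun s => if s ≤ T then f s else g s)
      (if t ≤ T then f' t else g' t) t := by
  rcases lt_trichotomy t T with h | rfl | h
  · rw [if_pos h.le]
    apply (hf t).congr_of_eventuallyEq
    filter_upwards [eventually_lt_nhds h] with s hs
    rw [if_pos hs.le]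
  · rw [if_pos le_rfl]
    rw [hasDerivAt_iff_tendsto_slope]
    rw [← nhdsLT_sup_nhdsGT, tendsto_sup]
    constructor
    · have h1 := (hasDerivAt_iff_tendsto_slope.1 (hf t)).mono_left
        (nhdsWithin_mono t (fun s hs => Set.mem_compl_singleton_iff.2 (ne_of_lt hs)))
      apply h1.congr'
      filter_upwards [eventually_mem_nhdsWithin] with s hs
      have hs' : s < t := Set.mem_Iio.1 hs
      simp only [slope_def_field, if_pos hs'.le, if_pos le_rfl]
    · have h1 := (hasDerivAt_iff_tendsto_slope.1 (hg t)).mono_left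
        (nhdsWithin_mono t (fun s hs => Set.mem_compl_singleton_iff.2 (ne_of_gt hs)))
      rw [hder]
      apply h1.congr'
      filter_upwards [eventually_mem_nhdsWithin] with s hs
      have hs' : t < s := Set.mem_Ioi.1 hs
      simp only [slope_def_field, if_neg (not_le.2 hs'), if_pos le_rfl, hval]
  · rw [if_neg (not_le.2 h)]
    apply (hg t).congr_of_eventuallyEq
    filter_upwards [eventually_gt_nhds h] with s hs
    rw [if_neg (not_le.2 hs)]


open Real Filter Set in
lemma Feas1_mono {vmax amax x₀ v₀ x₁ : ℝ} (hv : 0 < vmax) (ha : 0 < amax)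
    {T T' : ℝ} (hT : T ∈ Feas1 vmax amax x₀ v₀ x₁) (hle : T ≤ T') :
    T' ∈ Feas1 vmax amax x₀ v₀ x₁ := by
  rcases eq_or_lt_of_le hle with rfl | hlt
  · exact hT
  obtain ⟨hTpos, p, v, a, hpv, hva, hp0, hv0, hpT, hvT, hbd⟩ := hT
  have hπ : (0:ℝ) < π := Real.pi_pos
  set δ : ℝ := T' - T with hδdef
  have hδ : 0 < δ := sub_pos.2 hlt
  set k : ℕ := ⌈δ * amax / (2 * π * vmax)⌉₊ + 1 with hkdef
  have hk0 : (0:ℝ) < k := by exact_mod_cast Nat.succ_pos _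
  set ω : ℝ := 2 * π * k / δ with hωdef
  have hω : 0 < ω := by positivity
  have hceil : δ * amax / (2 * π * vmax) ≤ (k : ℝ) := by
    calc δ * amax / (2 * π * vmax) ≤ ((⌈δ * amax / (2 * π * vmax)⌉₊ : ℕ) : ℝ) :=
          Nat.le_ceil _
      _ ≤ (k : ℝ) := by rw [hkdef]; push_cast; linarith
  have hωv : amax / vmax ≤ ω := by
    rw [hωdef, div_le_div_iff₀ hv hδ]
    rw [div_le_iff₀ (by positivity)] at hceil
    nlinarith
  have haT : |a T| ≤ amax := (hbd T ⟨hTpos.le, le_rfl⟩).2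
  set c : ℝ := a T / ω with hcdef
  have hcω : c * ω = a T := by rw [hcdef]; exact div_mul_cancel₀ _ hω.ne'
  have hcv : |c| ≤ vmax := by
    rw [hcdef, abs_div, abs_of_pos hω, div_le_iff₀ hω]
    rw [div_le_iff₀ hv] at hωv
    calc |a T| ≤ amax := haT
      _ ≤ vmax * ω := by linarith
  set u : ℝ → ℝ := fun s => ω * (s - T) with hudef
  have hu : ∀ s, HasDerivAt u ω s := by
    intro s
    simpa using ((hasDerivAt_id s).sub_const T).const_mul ω
  set gp : ℝ → ℝ := fun s => x₁ + c / ω * (1 - Real.cos (u s)) with hgpdef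
  set gv : ℝ → ℝ := fun s => c * Real.sin (u s) with hgvdef
  set ga : ℝ → ℝ := fun s => (c * ω) * Real.cos (u s) with hgadef
  have hgpv : ∀ s, HasDerivAt gp (gv s) s := by
    intro s
    have h1 : HasDerivAt (fun s => Real.cos (u s)) (-Real.sin (u s) * ω) s :=
      (Real.hasDerivAt_cos (u s)).comp s (hu s)
    have := ((h1.const_sub 1).const_mul (c / ω)).const_add x₁
    convert this using 1
    show c * Real.sin (u s) = c / ω * -(-Real.sin (u s) * ω)
    rw [neg_mul, neg_neg, mul_comm (Real.sin _) ω, ← mul_assoc, div_mul_cancel₀ _ hω.ne']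
    all_goals rfl
  have hgva : ∀ s, HasDerivAt gv (ga s) s := by
    intro s
    have h1 : HasDerivAt (fun s => Real.sin (u s)) (Real.cos (u s) * ω) s :=
      (Real.hasDerivAt_sin (u s)).comp s (hu s)
    have := h1.const_mul c
    convert this using 1
    show c * ω * Real.cos (u s) = c * (Real.cos (u s) * ω)
    ring
    all_goals rfl
  have huT : u T = 0 := by simp [hudef]
  have hgpT : gp T = x₁ := by simp [hgpdef, huT]
  have hgvT : gv T = 0 := by simp [hgvdef, huT]
  have hgaT : ga T = a T := by simp [hgadef, huT, hcω]
  have huT' : u T' = (k : ℝ) * (2 * π) := by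
    rw [hudef]
    rw [hωdef]
    field_simp
    ring
  have hcosT' : Real.cos (u T') = 1 := by rw [huT']; exact Real.cos_nat_mul_two_pi k
  have hsinT' : Real.sin (u T') = 0 := by
    have : u T' = ((2 * k : ℤ) : ℝ) * π := by rw [huT']; push_cast; ring
    rw [this]; exact Real.sin_int_mul_pi _
  refine ⟨hTpos.trans hlt, fun s => if s ≤ T then p s else gp s,
    fun s => if s ≤ T then v s else gv s, fun s => if s ≤ T then a s else ga s,
    glue_deriv hpv hgpv (hpT.trans hgpT.symm) (hvT.trans hgvT.symm),
    glue_deriv hva hgva (hvT.trans hgvT.symm) hgaT.symm, ?_, ?_, ?_, ?_, ?_⟩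
  · show (if (0:ℝ) ≤ T then p 0 else gp 0) = x₀
    rw [if_pos hTpos.le]; exact hp0
  · show (if (0:ℝ) ≤ T then v 0 else gv 0) = v₀
    rw [if_pos hTpos.le]; exact hv0
  · show (if T' ≤ T then p T' else gp T') = x₁
    rw [if_neg (not_le.2 hlt)]
    simp [hgpdef, hcosT']
  · show (if T' ≤ T then v T' else gv T') = 0
    rw [if_neg (not_le.2 hlt)]
    simp [hgvdef, hsinT']
  · intro t ht
    show |if t ≤ T then v t else gv t| ≤ vmax ∧ |if t ≤ T then a t else ga t| ≤ amax
    by_cases htT : t ≤ T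
    · rw [if_pos htT, if_pos htT]
      exact hbd t ⟨ht.1, htT⟩
    · rw [if_neg htT, if_neg htT]
      constructor
      · calc |gv t| = |c| * |Real.sin (u t)| := by rw [hgvdef]; exact abs_mul _ _
          _ ≤ |c| * 1 := by
              exact mul_le_mul_of_nonneg_left (Real.abs_sin_le_one _) (abs_nonneg c)
          _ = |c| := mul_one _
          _ ≤ vmax := hcv
      · calc |ga t| = |c * ω| * |Real.cos (u t)| := by rw [hgadef]; exact abs_mul _ _
          _ ≤ |c * ω| * 1 := by
              exact mul_le_mul_of_nonneg_left (Real.abs_cos_le_one _) (abs_nonneg _)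
          _ = |a T| := by rw [mul_one, hcω]
          _ ≤ amax := haT

lemma hasDerivAt_fst {P : ℝ → ℝ × ℝ} {V : ℝ × ℝ} {t : ℝ} (h : HasDerivAt P V t) :
    HasDerivAt (fun s => (P s).1) V.1 t := by
  simpa using (h.hasFDerivAt.fst).hasDerivAt

lemma hasDerivAt_snd {P : ℝ → ℝ × ℝ} {V : ℝ × ℝ} {t : ℝ} (h : HasDerivAt P V t) :
    HasDerivAt (fun s => (P s).2) V.2 t := by
  simpa using (h.hasFDerivAt.snd).hasDerivAt

lemma Feas2_eq_inter (vmax amax x₀ y₀ v₀x v₀y x₁ y₁ : ℝ) :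
    Feas2 vmax amax x₀ y₀ v₀x v₀y x₁ y₁ =
      Feas1 vmax amax x₀ v₀x x₁ ∩ Feas1 vmax amax y₀ v₀y y₁ := by
  ext T
  constructor
  · rintro ⟨hTpos, P, V, A, hPV, hVA, hP0, hV0, hPT, hVT, hbd⟩
    constructor
    · exact ⟨hTpos, fun s => (P s).1, fun s => (V s).1, fun s => (A s).1,
        fun t => hasDerivAt_fst (hPV t), fun t => hasDerivAt_fst (hVA t),
        by simp [hP0], by simp [hV0], by simp [hPT], by simp [hVT],
        fun t ht => ⟨(hbd t ht).1.1, (hbd t ht).2.1⟩⟩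
    · exact ⟨hTpos, fun s => (P s).2, fun s => (V s).2, fun s => (A s).2,
        fun t => hasDerivAt_snd (hPV t), fun t => hasDerivAt_snd (hVA t),
        by simp [hP0], by simp [hV0], by simp [hPT], by simp [hVT],
        fun t ht => ⟨(hbd t ht).1.2, (hbd t ht).2.2⟩⟩
  · rintro ⟨⟨hTpos, p, v, a, hpv, hva, hp0, hv0, hpT, hvT, hbd⟩,
      ⟨_, q, w, b, hqw, hwb, hq0, hw0, hqT, hwT, hbd'⟩⟩
    refine ⟨hTpos, fun s => (p s, q s), fun s => (v s, w s), fun s => (a s, b s),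
      fun t => (hpv t).prodMk (hqw t), fun t => (hva t).prodMk (hwb t),
      by simp [hp0, hq0], by simp [hv0, hw0], by simp [hpT, hqT], by simp [hvT, hwT],
      fun t ht => ⟨⟨(hbd t ht).1, (hbd' t ht).1⟩, ⟨(hbd t ht).2, (hbd' t ht).2⟩⟩⟩

lemma sInf_inter_eq_max {A B : Set ℝ} (hA : A.Nonempty) (hB : B.Nonempty)
    (hA0 : ∀ t ∈ A, (0:ℝ) < t) (hB0 : ∀ t ∈ B, (0:ℝ) < t)
    (hAm : ∀ ⦃s t : ℝ⦄, s ∈ A → s ≤ t → t ∈ A)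
    (hBm : ∀ ⦃s t : ℝ⦄, s ∈ B → s ≤ t → t ∈ B) :
    (A ∩ B).Nonempty ∧ sInf (A ∩ B) = max (sInf A) (sInf B) := by
  have hbA : BddBelow A := ⟨0, fun t ht => (hA0 t ht).le⟩
  have hbB : BddBelow B := ⟨0, fun t ht => (hB0 t ht).le⟩
  have hbAB : BddBelow (A ∩ B) := ⟨0, fun t ht => (hA0 t ht.1).le⟩
  obtain ⟨ta, hta⟩ := hA
  obtain ⟨tb, htb⟩ := hB
  have hne : (A ∩ B).Nonempty :=
    ⟨max ta tb, hAm hta (le_max_left _ _), hBm htb (le_max_right _ _)⟩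
  refine ⟨hne, le_antisymm ?_ ?_⟩
  · refine le_of_forall_pos_le_add fun ε hε => ?_
    obtain ⟨a, haA, halt⟩ := exists_lt_of_csInf_lt ⟨ta, hta⟩
      (lt_add_of_pos_right (sInf A) hε)
    obtain ⟨b, hbB', hblt⟩ := exists_lt_of_csInf_lt ⟨tb, htb⟩
      (lt_add_of_pos_right (sInf B) hε)
    have hmem : max (sInf A) (sInf B) + ε ∈ A ∩ B := by
      constructor
      · exact hAm haA (by have := le_max_left (sInf A) (sInf B); linarith)
      · exact hBm hbB' (by have := le_max_right (sInf A) (sInf B); linarith)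
    exact csInf_le hbAB hmem
  · refine max_le ?_ ?_
    · exact le_csInf hne fun t ht => csInf_le hbA ht.1
    · exact le_csInf hne fun t ht => csInf_le hbB ht.2

theorem bottleneck_dimension
    (vmax amax : ℝ) (hv : 0 < vmax) (ha : 0 < amax)
    (x₀ y₀ x₁ y₁ v₀x v₀y : ℝ)
    (hx : (Feas1 vmax amax x₀ v₀x x₁).Nonempty)
    (hy : (Feas1 vmax amax y₀ v₀y y₁).Nonempty) :
    (Feas2 vmax amax x₀ y₀ v₀x v₀y x₁ y₁).Nonempty ∧
    sInf (Feas2 vmax amax x₀ y₀ v₀x v₀y x₁ y₁) =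
      max (sInf (Feas1 vmax amax x₀ v₀x x₁)) (sInf (Feas1 vmax amax y₀ v₀y y₁)) := by
  rw [Feas2_eq_inter]
  exact sInf_inter_eq_max hx hy (fun t ht => ht.1) (fun t ht => ht.1)
    (fun s t hs hst => Feas1_mono hv ha hs hst)
    (fun s t hs hst => Feas1_mono hv ha hs hst)
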